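/- Let G be a multigraph, k, p positive integers, and let A₁, …, A_p be nonempty subsets of p distinct equivalence classes of ∼ₖ. Then there is an edge set X of size at most (p−1)(k−1) such that for all distinct i, j, the multigraph G−X contains no path from A_i to A_j. -/

import Mathlib

/-- A multigraph: an edge type `E` together with an assignment of an
unordered pair of (not necessarily distinct) endvertices to every edge.
Loops and parallel edges are allowed. -/
structure Multigraph (V E : Type) where
  ends : E → Sym2 V

namespace Multigraph

variable {V E : Type}

/-- Walks in a multigraph, recording the edges traversed. -/
inductive Walk (G : Multigraph V E) : V → V → Type
  | nil (v : V) : Walk G v v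
  | cons {u v w : V} (e : E) (h : G.ends e = s(u, v)) (p : Walk G v w) : Walk G u w

namespace Walk

variable {G : Multigraph V E}

/-- The list of vertices visited by a walk. -/
def support : {u v : V} → G.Walk u v → List V
  | u, _, .nil _ => [u]
  | u, _, .cons _ _ p => u :: support p

/-- The list of edges traversed by a walk. -/
def edges : {u v : V} → G.Walk u v → List E
  | _, _, .nil _ => []
  | _, _, .cons e _ p => e :: edges p

/-- The length (number of edges) of a walk. -/
def length : {u v : V} → G.Walk u v → ℕ
  | _, _, .nil _ => 0
  | _, _, .cons _ _ p => length p + 1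

/-- A walk is a path if it repeats no vertex. -/
def IsPath {u v : V} (p : G.Walk u v) : Prop := p.support.Nodup

/-- A closed walk is a cycle if it is nonempty, repeats no edge and repeats no
vertex except the base vertex.  Cycles of length `1` (loops) and of
length `2` (pairs of parallel edges) are allowed. -/
def IsCycle {u : V} (p : G.Walk u u) : Prop :=
  p.edges ≠ [] ∧ p.edges.Nodup ∧ p.support.tail.Nodup

end Walk

open scoped Classical in
/-- The degree of a vertex in a multigraph: loops count twice. -/
noncomputable def degree (G : Multigraph V E) [Fintype E] (v : V) : ℕ :=
  ∑ e : E, (if G.ends e = s(v, v) then 2 else if v ∈ G.ends e then 1 else 0)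

end Multigraph

namespace Multigraph

variable {V E : Type}

/-- There exist `k` pairwise edge-disjoint `u`–`v`-paths in `G`. -/
def EdgeDisjointPaths (G : Multigraph V E) (k : ℕ) (u v : V) : Prop :=
  ∃ P : Fin k → G.Walk u v,
    (∀ i, (P i).IsPath) ∧
    ∀ i j, i ≠ j → ∀ e ∈ (P i).edges, e ∉ (P j).edges

/-- The relation `u ∼ₖ v`: either `u = v` or there are `k` pairwise
edge-disjoint `u`–`v`-paths in `G`. -/
def SimK (G : Multigraph V E) (k : ℕ) (u v : V) : Prop :=
  u = v ∨ G.EdgeDisjointPaths k u v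

end Multigraph

namespace Multigraph

open Finset

variable {V E : Type} {G : Multigraph V E}

namespace Walk

lemma start_mem_support : ∀ {u v : V} (p : G.Walk u v), u ∈ p.support
  | _, _, .nil _ => by simp [support]
  | _, _, .cons e h p => by simp [support]

lemma end_mem_support : ∀ {u v : V} (p : G.Walk u v), v ∈ p.support
  | _, _, .nil _ => by simp [support]
  | _, _, .cons e h p => by simp [support]; exact Or.inr (end_mem_support p)

lemma mem_support_of_mem_edges :
    ∀ {u v : V} (p : G.Walk u v) (e : E), e ∈ p.edges →
      ∀ x ∈ G.ends e, x ∈ p.support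
  | _, _, .nil _, e, he => by simp [edges] at he
  | u, v, .cons e' h' p', e, he => by
    intro x hx
    simp [edges] at he
    rcases he with rfl | he
    · rw [h'] at hx
      rcases Sym2.mem_iff.1 hx with rfl | rfl
      · exact start_mem_support _
      · simp [support]; exact Or.inr (start_mem_support p')
    · simp [support]; exact Or.inr (mem_support_of_mem_edges p' e he x hx)

lemma edges_nodup_of_isPath : ∀ {u v : V} (p : G.Walk u v), p.IsPath → p.edges.Nodup
  | _, _, .nil _, _ => by simp [edges]
  | u, v, .cons e h p, hp => by
    have hs : (u :: p.support).Nodup := hp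
    rw [List.nodup_cons] at hs
    have : e ∉ p.edges := by
      intro he
      exact hs.1 (mem_support_of_mem_edges p e he u (by rw [h]; simp))
    simp [edges, List.nodup_cons, this]
    exact edges_nodup_of_isPath p hs.2

/-- A stepwise predicate holding along a walk: `P u x e` for each step from `u`
to `x` through edge `e`. -/
def Sat (P : V → V → E → Prop) : ∀ {u v : V}, G.Walk u v → Prop
  | _, _, .nil _ => True
  | _, _, @Walk.cons _ _ _ u x _ e _ p => P u x e ∧ Sat P p

lemma exists_crossing_edge (R : Finset V) :
    ∀ {u v : V} (p : G.Walk u v), u ∈ R → v ∉ R →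
      ∃ e ∈ p.edges, ∃ x y, G.ends e = s(x, y) ∧ x ∈ R ∧ y ∉ R
  | _, _, .nil _, hu, hv => absurd hu hv
  | u, v, @Walk.cons _ _ _ _ x _ e h p, hu, hv => by
    by_cases hx : x ∈ R
    · obtain ⟨e', he', hc⟩ := exists_crossing_edge R p hx hv
      exact ⟨e', by simp [edges, he'], hc⟩
    · exact ⟨e, by simp [edges], u, x, h, hu, hx⟩

/-- Extract from a walk a subwalk starting at a given support vertex. -/
lemma exists_suffix :
    ∀ {u v : V} (p : G.Walk u v) (x : V), x ∈ p.support →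
      ∀ (P : V → V → E → Prop), p.Sat P →
      ∃ q : G.Walk x v, q.Sat P ∧ q.support.Sublist p.support ∧
        q.edges.Sublist p.edges
  | u, _, .nil _, x, hx, P, hP => by
    simp [support] at hx
    subst hx
    exact ⟨.nil _, trivial, List.Sublist.refl _, List.Sublist.refl _⟩
  | u, v, @Walk.cons _ _ _ _ y _ e h p, x, hx, P, hP => by
    rcases (by simpa [support] using hx : x = u ∨ x ∈ p.support) with rfl | hx'
    · exact ⟨.cons e h p, hP, List.Sublist.refl _, List.Sublist.refl _⟩
    · obtain ⟨q, hq1, hq2, hq3⟩ := exists_suffix p x hx' P hP.2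
      exact ⟨q, hq1, hq2.trans (List.sublist_cons_self _ _),
        hq3.trans (List.sublist_cons_self _ _)⟩

/-- Shortcut a walk to a path, preserving a stepwise predicate and using only
edges of the original walk. -/
lemma exists_path (P : V → V → E → Prop) :
    ∀ {u v : V} (p : G.Walk u v), p.Sat P →
      ∃ q : G.Walk u v, q.IsPath ∧ q.Sat P ∧ ∀ e ∈ q.edges, e ∈ p.edges := by
  intro u v p
  induction p with
  | nil w => exact fun _ => ⟨.nil _, by simp [IsPath, support], trivial, by simp [edges]⟩
  | cons e h p ih =>
    intro hP
    obtain ⟨q, hq1, hq2, hq3⟩ := ih hP.2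
    rename_i u x w
    by_cases hu : u ∈ q.support
    · obtain ⟨r, hr1, hr2, hr3⟩ := exists_suffix q u hu P hq2
      exact ⟨r, (hq1.sublist hr2 : _), hr1, fun e' he' => by
        simp [edges]
        exact Or.inr (hq3 e' (hr3.mem he'))⟩
    · refine ⟨.cons e h q, ?_, ⟨hP.1, hq2⟩, fun e' he' => by
        simp [edges] at he' ⊢
        rcases he' with rfl | he'
        · exact Or.inl rfl
        · exact Or.inr (hq3 e' he')⟩
      simpa [IsPath, support, List.nodup_cons, hu] using hq1

end Walk

end Multigraph
namespace Multigraph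

open Finset
open scoped Classical
set_option linter.unusedSectionVars false

variable {V E : Type} [Fintype V] [Fintype E] {G : Multigraph V E}

/-- An edge crosses the vertex set `R`. -/
def Crossing (G : Multigraph V E) (R : Finset V) (e : E) : Prop :=
  ∃ x y, G.ends e = s(x, y) ∧ x ∈ R ∧ y ∉ R

open scoped Classical in
/-- The set of edges crossing `R`. -/
noncomputable def cutset (G : Multigraph V E) (R : Finset V) : Finset E :=
  univ.filter (fun e => G.Crossing R e)

open scoped Classical in
lemma mem_cutset {R : Finset V} {e : E} : e ∈ G.cutset R ↔ G.Crossing R e := by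
  simp [cutset]

lemma crossing_iff {R : Finset V} {e : E} {x y : V} (h : G.ends e = s(x, y)) :
    G.Crossing R e ↔ ((x ∈ R ∧ y ∉ R) ∨ (y ∈ R ∧ x ∉ R)) := by
  constructor
  · rintro ⟨a, b, hab, ha, hb⟩
    rw [h, Sym2.eq_iff] at hab
    rcases hab with ⟨rfl, rfl⟩ | ⟨rfl, rfl⟩
    · exact Or.inl ⟨ha, hb⟩
    · exact Or.inr ⟨ha, hb⟩
  · rintro (⟨hx, hy⟩ | ⟨hy, hx⟩)
    · exact ⟨x, y, h, hx, hy⟩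
    · exact ⟨y, x, by rw [h, Sym2.eq_swap], hy, hx⟩

lemma cutset_compl (R : Finset V) : G.cutset Rᶜ = G.cutset R := by
  ext e
  obtain ⟨x, y, h⟩ := Sym2.exists.mp ⟨G.ends e, rfl⟩
  rw [mem_cutset, mem_cutset, crossing_iff h, crossing_iff h]
  simp only [Finset.mem_compl]
  tauto

lemma cutset_card_eq (R : Finset V) :
    (G.cutset R).card = ∑ e : E, if G.Crossing R e then 1 else 0 :=
  Finset.card_filter _ _

lemma cutset_submodular (R S : Finset V) :
    (G.cutset (R ∩ S)).card + (G.cutset (R ∪ S)).card ≤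
      (G.cutset R).card + (G.cutset S).card := by
  rw [cutset_card_eq, cutset_card_eq, cutset_card_eq, cutset_card_eq,
    ← Finset.sum_add_distrib, ← Finset.sum_add_distrib]
  apply Finset.sum_le_sum
  intro e _
  obtain ⟨x, y, h⟩ := Sym2.exists.mp ⟨G.ends e, rfl⟩
  rw [crossing_iff h, crossing_iff h, crossing_iff h, crossing_iff h]
  by_cases hxR : x ∈ R <;> by_cases hxS : x ∈ S <;>
    by_cases hyR : y ∈ R <;> by_cases hyS : y ∈ S <;>
    simp [Finset.mem_inter, Finset.mem_union, hxR, hxS, hyR, hyS]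

end Multigraph
namespace Multigraph

open Finset
open scoped Classical
set_option linter.unusedSectionVars false

variable {V E : Type} [Fintype V] [Fintype E] {G : Multigraph V E}

/-- An orientation-assignment is valid if assigned pairs match edge ends. -/
def Valid (G : Multigraph V E) (g : E → Option (V × V)) : Prop :=
  ∀ e x y, g e = some (x, y) → G.ends e = s(x, y)

/-- Indicator. -/
noncomputable def ind (v w : V) : ℤ := if v = w then 1 else 0

noncomputable def outZ (g : E → Option (V × V)) (v : V) : ℤ :=
  ∑ e : E, (g e).elim 0 (fun p => ind p.1 v)

noncomputable def inZ (g : E → Option (V × V)) (v : V) : ℤ :=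
  ∑ e : E, (g e).elim 0 (fun p => ind p.2 v)

noncomputable def Dz (g : E → Option (V × V)) (v : V) : ℤ := outZ g v - inZ g v

noncomputable def used (g : E → Option (V × V)) : Finset E :=
  univ.filter (fun e => g e ≠ none)

lemma mem_used {g : E → Option (V × V)} {e : E} : e ∈ used g ↔ g e ≠ none := by
  simp [used]

lemma sum_update (f : E → ℤ) (e : E) (c : ℤ) :
    ∑ x : E, Function.update f e c x = ∑ x : E, f x - f e + c := by
  rw [Finset.sum_update_of_mem (mem_univ e)]
  rw [show (univ : Finset E) \ {e} = univ.erase e by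
    rw [Finset.sdiff_singleton_eq_erase]]
  rw [Finset.sum_erase_eq_sub (mem_univ e)]
  ring

lemma outZ_update (g : E → Option (V × V)) (e : E) (c : Option (V × V)) (v : V) :
    outZ (Function.update g e c) v =
      outZ g v - (g e).elim 0 (fun p => ind p.1 v) + c.elim 0 (fun p => ind p.1 v) := by
  unfold outZ
  rw [show (fun x : E => ((Function.update g e c) x).elim 0 (fun p => ind p.1 v)) =
    Function.update (fun x => (g x).elim 0 (fun p : V × V => ind p.1 v)) e
      (c.elim 0 (fun p => ind p.1 v)) from funext fun x => by
    by_cases hx : x = e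
    · subst hx; simp
    · simp [Function.update_of_ne hx]]
  exact sum_update _ _ _

lemma inZ_update (g : E → Option (V × V)) (e : E) (c : Option (V × V)) (v : V) :
    inZ (Function.update g e c) v =
      inZ g v - (g e).elim 0 (fun p => ind p.2 v) + c.elim 0 (fun p => ind p.2 v) := by
  unfold inZ
  rw [show (fun x : E => ((Function.update g e c) x).elim 0 (fun p => ind p.2 v)) =
    Function.update (fun x => (g x).elim 0 (fun p : V × V => ind p.2 v)) e
      (c.elim 0 (fun p => ind p.2 v)) from funext fun x => by
    by_cases hx : x = e
    · subst hx; simp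
    · simp [Function.update_of_ne hx]]
  exact sum_update _ _ _

lemma Dz_update_none {g : E → Option (V × V)} {e : E} {x y : V}
    (h : g e = some (x, y)) (w : V) :
    Dz (Function.update g e none) w = Dz g w - ind x w + ind y w := by
  unfold Dz
  rw [outZ_update, inZ_update, h]
  simp [Option.elim]
  ring

lemma Dz_update_some {g : E → Option (V × V)} {e : E} {x y : V}
    (h : g e = none) (w : V) :
    Dz (Function.update g e (some (x, y))) w = Dz g w + ind x w - ind y w := by
  unfold Dz
  rw [outZ_update, inZ_update, h]
  simp [Option.elim]
  ring

lemma inZ_nonneg (g : E → Option (V × V)) (v : V) : 0 ≤ inZ g v :=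
  Finset.sum_nonneg fun e _ => by
    cases h : g e with
    | none => simp
    | some p => simp [ind]; positivity

lemma exists_out_edge {g : E → Option (V × V)} {v : V} (h : 0 < outZ g v) :
    ∃ e y, g e = some (v, y) := by
  by_contra hc
  push_neg at hc
  have : outZ g v = 0 := Finset.sum_eq_zero fun e _ => by
    cases he : g e with
    | none => simp
    | some p =>
      rcases p with ⟨x, y⟩
      simp only [Option.elim]
      have : x ≠ v := fun hxv => hc e y (by rw [he, hxv])
      simp [ind, this]
  omega

/-- Extract a trail from `v` to `b` out of a "preflow" `g` with positive
divergence at `v` and nonnegative divergence away from `b`. -/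
lemma exists_trail :
    ∀ (n : ℕ) (g : E → Option (V × V)), (used g).card = n → G.Valid g →
    ∀ (v b : V), (v ≠ b → 1 ≤ Dz g v) → (∀ x, x ≠ b → 0 ≤ Dz g x) →
    ∃ (w : G.Walk v b) (g' : E → Option (V × V)), G.Valid g' ∧
      (∀ e, e ∉ w.edges → g' e = g e) ∧
      (∀ e ∈ w.edges, g' e = none ∧ g e ≠ none) ∧
      (∀ x, Dz g' x = Dz g x - ind v x + ind b x) := by
  intro n
  induction n using Nat.strong_induction_on with
  | _ n ih =>
    intro g hcard hval v b h1 h0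
    by_cases hvb : v = b
    · subst hvb
      refine ⟨.nil v, g, hval, fun e _ => rfl, by simp [Walk.edges], fun x => by ring⟩
    · have hout : 0 < outZ g v := by
        have := h1 hvb
        have := inZ_nonneg g v
        unfold Dz at *
        omega
      obtain ⟨e, y, he⟩ := exists_out_edge hout
      have hends : G.ends e = s(v, y) := hval e v y he
      set g₁ := Function.update g e none with hg₁
      have hval₁ : G.Valid g₁ := by
        intro e' x' y' h'
        by_cases hx : e' = e
        · subst hx; simp [hg₁] at h'
        · rw [hg₁, Function.update_of_ne hx] at h'
          exact hval e' x' y' h'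
      have hDz₁ : ∀ w, Dz g₁ w = Dz g w - ind v w + ind y w := Dz_update_none he
      have hused₁ : used g₁ = (used g).erase e := by
        ext e'
        by_cases hx : e' = e
        · subst hx; simp [mem_used, hg₁]
        · simp [mem_used, hg₁, Function.update_of_ne hx, hx]
      have hcard₁ : (used g₁).card < n := by
        rw [hused₁, ← hcard]
        exact Finset.card_erase_lt_of_mem (mem_used.2 (by rw [he]; simp))
      have h1' : y ≠ b → 1 ≤ Dz g₁ y := by
        intro hyb
        rw [hDz₁]
        by_cases hyv : v = y
        · subst hyv; have := h1 hvb; simp [ind]; omega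
        · have := h0 y hyb; simp [ind, hyv]; omega
      have h0' : ∀ x, x ≠ b → 0 ≤ Dz g₁ x := by
        intro x hxb
        rw [hDz₁]
        by_cases hxv : v = x
        · subst hxv; have := h1 hvb
          by_cases hyx : y = v <;> simp [ind, hyx] <;> omega
        · have := h0 x hxb
          by_cases hyx : y = x <;> simp [ind, hxv, hyx] <;> omega
      obtain ⟨w', g', hval', hout', hin', hDz'⟩ :=
        ih _ hcard₁ g₁ rfl hval₁ y b h1' h0'
      refine ⟨.cons e hends w', g', hval', ?_, ?_, ?_⟩
      · intro e' he'
        simp [Walk.edges] at he'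
        rw [hout' e' he'.2, hg₁, Function.update_of_ne he'.1]
      · intro e' he'
        simp [Walk.edges] at he'
        rcases he' with rfl | he'
        · constructor
          · by_cases hx : e' ∈ w'.edges
            · exact (hin' e' hx).1
            · rw [hout' e' hx, hg₁]; simp
          · rw [he]; simp
        · have h1 := hin' e' he'
          have hne : e' ≠ e := by
            intro hx; subst hx
            exact h1.2 (by simp [hg₁])
          refine ⟨h1.1, ?_⟩
          rw [hg₁, Function.update_of_ne hne] at h1
          exact h1.2
      · intro x
        rw [hDz' x, hDz₁ x]
        ring

end Multigraph

namespace Multigraph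

variable {V : Type}

lemma ind_nonneg (v w : V) : 0 ≤ ind v w := by unfold ind; split <;> omega

lemma ind_self (v : V) : ind v v = 1 := if_pos rfl

lemma ind_ne {v w : V} (h : v ≠ w) : ind v w = 0 := if_neg h

end Multigraph
namespace Multigraph

open Finset
open scoped Classical
set_option linter.unusedSectionVars false

variable {V E : Type} [Fintype V] [Fintype E] {G : Multigraph V E}

lemma flow_decomp :
    ∀ (k : ℕ) (g : E → Option (V × V)), G.Valid g → ∀ (a b : V),
    (∀ x, Dz g x = k * ind a x - k * ind b x) →
    ∃ P : Fin k → G.Walk a b,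
      (∀ i, ∀ e ∈ (P i).edges, g e ≠ none) ∧
      (∀ i j, i ≠ j → ∀ e ∈ (P i).edges, e ∉ (P j).edges) := by
  intro k
  induction k with
  | zero =>
    intro g _ a b _
    exact ⟨fun i => i.elim0, fun i => i.elim0, fun i => i.elim0⟩
  | succ k ihk =>
    intro g hval a b hD
    have h1 : a ≠ b → 1 ≤ Dz g a := by
      intro hab
      rw [hD a, ind_self, ind_ne (Ne.symm hab)]
      push_cast
      ring_nf
      omega
    have h0 : ∀ x, x ≠ b → 0 ≤ Dz g x := by
      intro x hxb
      rw [hD x, ind_ne (fun h => hxb h.symm)]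
      have h := ind_nonneg a x
      nlinarith [Int.natCast_nonneg (k + 1)]
    obtain ⟨w, g', hval', hout', hin', hDz'⟩ :=
      exists_trail (used g).card g rfl hval a b h1 h0
    have hD' : ∀ x, Dz g' x = k * ind a x - k * ind b x := by
      intro x
      rw [hDz' x, hD x]
      push_cast
      ring
    obtain ⟨P', hP'1, hP'2⟩ := ihk g' hval' a b hD'
    refine ⟨Fin.cases w P', ?_, ?_⟩
    · intro i
      induction i using Fin.cases with
      | zero =>
        intro e he
        simpa using (hin' e (by simpa using he)).2
      | succ i =>
        intro e he
        simp only [Fin.cases_succ] at he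
        have hg' := hP'1 i e he
        have hnw : e ∉ w.edges := fun hw => hg' (hin' e hw).1
        rw [← hout' e hnw]
        exact hg'
    · intro i j hij
      induction i using Fin.cases with
      | zero =>
        induction j using Fin.cases with
        | zero => exact absurd rfl hij
        | succ j =>
          intro e he
          simp only [Fin.cases_zero, Fin.cases_succ] at he ⊢
          intro hej
          exact hP'1 j e hej (hin' e he).1
      | succ i =>
        induction j using Fin.cases with
        | zero =>
          intro e he
          simp only [Fin.cases_zero, Fin.cases_succ] at he ⊢
          intro hej
          exact hP'1 i e he (hin' e hej).1
        | succ j =>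
          intro e he
          simp only [Fin.cases_succ] at he ⊢
          exact hP'2 i j (fun h => hij (by rw [h])) e he

lemma sat_trivial : ∀ {u v : V} (p : G.Walk u v), p.Sat (fun _ _ _ => True)
  | _, _, .nil _ => trivial
  | _, _, .cons e h p => ⟨trivial, sat_trivial p⟩

/-- Traversal from `u` to `x` through `e` is possible in the residual graph. -/
def resOK (f : E → Option (V × V)) (u x : V) (e : E) : Prop :=
  f e = none ∨ f e = some (x, u)

/-- A residual step. -/
def RStep (G : Multigraph V E) (f : E → Option (V × V)) (u x : V) : Prop :=
  ∃ e, G.ends e = s(u, x) ∧ resOK f u x e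

lemma reach_walk {f : E → Option (V × V)} {u b : V}
    (h : Relation.ReflTransGen (G.RStep f) u b) :
    ∃ w : G.Walk u b, w.Sat (resOK f) := by
  induction h using Relation.ReflTransGen.head_induction_on with
  | refl => exact ⟨.nil b, trivial⟩
  | head hstep _ ih =>
    obtain ⟨e, hends, hres⟩ := hstep
    obtain ⟨w, hw⟩ := ih
    exact ⟨.cons e hends w, ⟨hres, hw⟩⟩

lemma augment_along :
    ∀ {u b : V} (p : G.Walk u b), p.edges.Nodup → ∀ (f g : E → Option (V × V)),
    G.Valid g → (∀ e ∈ p.edges, g e = f e) → p.Sat (resOK f) →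
    ∃ g', G.Valid g' ∧ (∀ x, Dz g' x = Dz g x + ind u x - ind b x) := by
  intro u b p
  induction p with
  | nil w => exact fun _ f g hval _ _ => ⟨g, hval, fun x => by ring⟩
  | cons e h p ih =>
    rename_i u m w
    intro hnd f g hval hagree hsat
    have hnd' : p.edges.Nodup := (List.nodup_cons.1 (by simpa [Walk.edges] using hnd)).2
    have hem : e ∉ p.edges := (List.nodup_cons.1 (by simpa [Walk.edges] using hnd)).1
    have hge : g e = f e := hagree e (by simp [Walk.edges])
    obtain ⟨g₁, hval₁, hDz₁, hagree₀⟩ : ∃ g₁, G.Valid g₁ ∧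
        (∀ x, Dz g₁ x = Dz g x + ind u x - ind m x) ∧
        (∀ e', e' ≠ e → g₁ e' = g e') := by
      rcases hsat.1 with hfe | hfe
      · refine ⟨Function.update g e (some (u, m)), ?_, ?_, fun e' h' => Function.update_of_ne h' _ _⟩
        · intro e' x' y' h'
          by_cases hx : e' = e
          · subst hx
            simp at h'
            rw [← h'.1, ← h'.2]
            exact h
          · rw [Function.update_of_ne hx] at h'
            exact hval e' x' y' h'
        · intro x
          rw [Dz_update_some (by rw [hge, hfe])]
      · refine ⟨Function.update g e none, ?_, ?_, fun e' h' => Function.update_of_ne h' _ _⟩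
        · intro e' x' y' h'
          by_cases hx : e' = e
          · subst hx; simp at h'
          · rw [Function.update_of_ne hx] at h'
            exact hval e' x' y' h'
        · intro x
          rw [Dz_update_none (show g e = some (m, u) by rw [hge, hfe])]
          ring
    have hagree₁ : ∀ e' ∈ p.edges, g₁ e' = f e' := by
      intro e' he'
      have hne : e' ≠ e := fun hx => hem (hx ▸ he')
      rw [hagree₀ e' hne]
      exact hagree e' (by simp [Walk.edges, he'])
    obtain ⟨g', hval', hDz'⟩ := ih hnd' f g₁ hval₁ hagree₁ hsat.2
    exact ⟨g', hval', fun x => by rw [hDz' x, hDz₁ x]; ring⟩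

end Multigraph
namespace Multigraph

open Finset
open scoped Classical
set_option linter.unusedSectionVars false

variable {V E : Type} [Fintype V] [Fintype E] {G : Multigraph V E}

lemma exists_flow (k : ℕ) (a b : V)
    (hcut : ∀ R : Finset V, a ∈ R → b ∉ R → k ≤ (G.cutset R).card) :
    ∃ g : E → Option (V × V), G.Valid g ∧
      ∀ x, Dz g x = k * ind a x - k * ind b x := by
  induction k with
  | zero =>
    refine ⟨fun _ => none, fun e x y h => by simp at h, fun x => ?_⟩
    simp [Dz, outZ, inZ]
  | succ k ihk =>
    obtain ⟨g, hval, hD⟩ := ihk fun R ha hb => le_trans (Nat.le_succ k) (hcut R ha hb)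
    -- there must be an augmenting residual path
    have hreach : Relation.ReflTransGen (G.RStep g) a b := by
      by_contra hnr
      set R : Finset V := univ.filter (fun v => Relation.ReflTransGen (G.RStep g) a v)
        with hR
      have haR : a ∈ R := by
        simp only [hR, mem_filter, mem_univ, true_and]
        exact Relation.ReflTransGen.refl
      have hbR : b ∉ R := by simp [hR]; exact hnr
      have hstep : ∀ x y, x ∈ R → Relation.ReflTransGen (G.RStep g) a x →
          G.RStep g x y → y ∈ R := by
        intro x y _ hx hxy
        simp [hR]
        exact hx.tail hxy
      have hkey : ∀ e ∈ G.cutset R, ∃ x y, G.ends e = s(x, y) ∧ x ∈ R ∧ y ∉ R ∧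
          g e = some (x, y) := by
        intro e he
        obtain ⟨x, y, hends, hx, hy⟩ := mem_cutset.1 he
        have hax : Relation.ReflTransGen (G.RStep g) a x := by
          simpa [hR] using hx
        refine ⟨x, y, hends, hx, hy, ?_⟩
        cases hge : g e with
        | none =>
          exact absurd (hstep x y hx hax ⟨e, hends, Or.inl hge⟩) hy
        | some p =>
          rcases p with ⟨p₁, p₂⟩
          have := hval e p₁ p₂ hge
          rw [hends] at this
          rcases Sym2.eq_iff.1 this.symm with ⟨rfl, rfl⟩ | ⟨rfl, rfl⟩
          · rfl
          · exact absurd (hstep p₂ p₁ hx hax ⟨e, hends, Or.inr hge⟩) hy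
      -- counting across the cut
      have hsum1 : ∑ v ∈ R, Dz g v = (k : ℤ) := by
        have : ∀ v ∈ R, Dz g v = k * ind a v - k * ind b v := fun v _ => hD v
        rw [Finset.sum_congr rfl this, Finset.sum_sub_distrib]
        rw [← Finset.mul_sum, ← Finset.mul_sum]
        unfold ind
        rw [Finset.sum_ite_eq R a (fun _ => (1 : ℤ)),
          Finset.sum_ite_eq R b (fun _ => (1 : ℤ))]
        simp [haR, hbR]
      have hsum2 : ∑ v ∈ R, Dz g v =
          ∑ e : E, (g e).elim 0
            (fun p => (if p.1 ∈ R then (1:ℤ) else 0) - (if p.2 ∈ R then 1 else 0)) := by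
        have step1 : ∑ v ∈ R, Dz g v =
            ∑ v ∈ R, ∑ e : E, ((g e).elim 0 (fun p => ind p.1 v)
              - (g e).elim 0 (fun p => ind p.2 v)) := by
          unfold Dz outZ inZ
          exact Finset.sum_congr rfl fun v _ => by rw [Finset.sum_sub_distrib]
        rw [step1, Finset.sum_comm]
        refine Finset.sum_congr rfl fun e _ => ?_
        cases hge : g e with
        | none => simp
        | some p =>
          simp only [Option.elim]
          rw [Finset.sum_sub_distrib]
          unfold ind
          rw [Finset.sum_ite_eq R p.1 (fun _ => (1:ℤ)),
            Finset.sum_ite_eq R p.2 (fun _ => (1:ℤ))]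
      have hchi_nonneg : ∀ e : E, e ∉ G.cutset R → (0:ℤ) ≤ (g e).elim 0
          (fun p => (if p.1 ∈ R then (1:ℤ) else 0) - (if p.2 ∈ R then 1 else 0)) := by
        intro e he
        cases hge : g e with
        | none => simp
        | some p =>
          rcases p with ⟨p₁, p₂⟩
          simp only [Option.elim]
          by_cases h1 : p₁ ∈ R
          · by_cases h2 : p₂ ∈ R <;> simp [h1, h2]
          · by_cases h2 : p₂ ∈ R
            · exfalso
              apply he
              rw [mem_cutset]
              exact ⟨p₂, p₁, by rw [hval e p₁ p₂ hge, Sym2.eq_swap], h2, h1⟩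
            · simp [h1, h2]
      have hchi_one : ∀ e ∈ G.cutset R, (g e).elim 0
          (fun p => (if p.1 ∈ R then (1:ℤ) else 0) - (if p.2 ∈ R then 1 else 0)) = 1 := by
        intro e he
        obtain ⟨x, y, _, hx, hy, hge⟩ := hkey e he
        rw [hge]
        simp [hx, hy]
      have hcard_le : ((G.cutset R).card : ℤ) ≤ (k : ℤ) := by
        rw [← hsum1, hsum2]
        calc ((G.cutset R).card : ℤ)
            = ∑ e ∈ G.cutset R, (1:ℤ) := by simp
          _ = ∑ e ∈ G.cutset R, (g e).elim 0
              (fun p => (if p.1 ∈ R then (1:ℤ) else 0) - (if p.2 ∈ R then 1 else 0)) :=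
            (Finset.sum_congr rfl fun e he => (hchi_one e he).symm)
          _ ≤ ∑ e : E, (g e).elim 0
              (fun p => (if p.1 ∈ R then (1:ℤ) else 0) - (if p.2 ∈ R then 1 else 0)) :=
            Finset.sum_le_sum_of_subset_of_nonneg (Finset.subset_univ _)
              (fun e _ hne => hchi_nonneg e hne)
      have := hcut R haR hbR
      omega
    -- augment
    obtain ⟨w, hw⟩ := reach_walk hreach
    obtain ⟨q, hq1, hq2, _⟩ := Walk.exists_path (resOK g) w hw
    obtain ⟨g', hval', hDz'⟩ := augment_along q (Walk.edges_nodup_of_isPath q hq1)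
      g g hval (fun _ _ => rfl) hq2
    refine ⟨g', hval', fun x => ?_⟩
    rw [hDz' x, hD x]
    push_cast
    ring

/-- Edge-Menger, hard direction: if every cut between `a` and `b` has at least
`k` edges then there are `k` pairwise edge-disjoint `a`–`b`-paths. -/
lemma menger (k : ℕ) (a b : V)
    (hcut : ∀ R : Finset V, a ∈ R → b ∉ R → k ≤ (G.cutset R).card) :
    G.EdgeDisjointPaths k a b := by
  obtain ⟨g, hval, hD⟩ := exists_flow k a b hcut
  obtain ⟨P, _, hP2⟩ := flow_decomp k g hval a b hD
  refine ⟨fun i => Classical.choose (Walk.exists_path (fun _ _ _ => True) (P i)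
    (sat_trivial _)), fun i => ?_, fun i j hij e he hej => ?_⟩
  · exact (Classical.choose_spec (Walk.exists_path (fun _ _ _ => True) (P i)
      (sat_trivial _))).1
  · have hi := (Classical.choose_spec (Walk.exists_path (fun _ _ _ => True) (P i)
      (sat_trivial _))).2.2 e he
    have hj := (Classical.choose_spec (Walk.exists_path (fun _ _ _ => True) (P j)
      (sat_trivial _))).2.2 e hej
    exact hP2 i j hij e hi hj

end Multigraph
namespace Multigraph

open Finset
open scoped Classical
set_option linter.unusedSectionVars false

variable {V E : Type} [Fintype V] [Fintype E] {G : Multigraph V E}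

/-- `R` respects every blob in `Pb`. -/
def Resp (R : Finset V) (Pb : Finset (Finset V)) : Prop :=
  ∀ B ∈ Pb, B ⊆ R ∨ Disjoint B R

lemma Resp.inter {R S : Finset V} {Pb : Finset (Finset V)}
    (h1 : Resp R Pb) (h2 : Resp S Pb) : Resp (R ∩ S) Pb := by
  intro B hB
  rcases h1 B hB with hs | hd
  · rcases h2 B hB with hs' | hd'
    · exact Or.inl (Finset.subset_inter hs hs')
    · exact Or.inr (hd'.mono_right Finset.inter_subset_right)
  · exact Or.inr (hd.mono_right Finset.inter_subset_left)

lemma Resp.union {R S : Finset V} {Pb : Finset (Finset V)}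
    (h1 : Resp R Pb) (h2 : Resp S Pb) : Resp (R ∪ S) Pb := by
  intro B hB
  rcases h1 B hB with hs | hd
  · exact Or.inl (hs.trans Finset.subset_union_left)
  · rcases h2 B hB with hs' | hd'
    · exact Or.inl (hs'.trans Finset.subset_union_right)
    · exact Or.inr (Finset.disjoint_union_right.2 ⟨hd, hd'⟩)

lemma Resp.compl {R : Finset V} {Pb : Finset (Finset V)}
    (h : Resp R Pb) : Resp Rᶜ Pb := by
  intro B hB
  rcases h B hB with hs | hd
  · refine Or.inr (Finset.disjoint_left.2 fun a ha hc => ?_)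
    exact (Finset.mem_compl.1 hc) (hs ha)
  · refine Or.inl fun a ha => Finset.mem_compl.2 fun hc => ?_
    exact (Finset.disjoint_left.1 hd) ha hc

lemma separate_rec (k : ℕ) (hk : 1 ≤ k) :
    ∀ (n : ℕ) (𝒜 : Finset (Set V)) (Pb : Finset (Finset V)), 𝒜.card = n →
    (∀ A ∈ 𝒜, (A : Set V).Nonempty) →
    (∀ A ∈ 𝒜, ∀ B ∈ 𝒜, A ≠ B → ∀ u ∈ A, ∀ v ∈ B,
      ∃ R : Finset V, Resp R Pb ∧ u ∈ R ∧ v ∉ R ∧ (G.cutset R).card ≤ k - 1) →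
    (∀ A ∈ 𝒜, ∀ u ∈ A, ∀ v ∈ A, ∀ R : Finset V, u ∈ R → v ∉ R →
      k ≤ (G.cutset R).card) →
    ∃ X : Finset E, X.card ≤ (𝒜.card - 1) * (k - 1) ∧
      ∀ A ∈ 𝒜, ∀ B ∈ 𝒜, A ≠ B → ∀ u ∈ A, ∀ v ∈ B,
        ∃ R : Finset V, u ∈ R ∧ v ∉ R ∧ G.cutset R ⊆ X := by
  intro n
  induction n using Nat.strong_induction_on with
  | _ n ih =>
  intro 𝒜 Pb hcardn hne hH1 hH2
  by_cases hsmall : 𝒜.card ≤ 1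
  · refine ⟨∅, by simp, fun A hA B hB hAB u hu v hv => ?_⟩
    exact absurd (Finset.card_le_one.1 hsmall A hA B hB) hAB
  -- pick two distinct classes and a minimal respecting separating cut S
  push_neg at hsmall
  obtain ⟨A₀, hA₀, B₀, hB₀, hAB₀⟩ := Finset.one_lt_card.1 hsmall
  obtain ⟨u₀, hu₀⟩ := hne A₀ hA₀
  obtain ⟨v₀, hv₀⟩ := hne B₀ hB₀
  obtain ⟨R₀, hR₀resp, hR₀u, hR₀v, hR₀card⟩ := hH1 A₀ hA₀ B₀ hB₀ hAB₀ u₀ hu₀ v₀ hv₀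
  set 𝒮 : Finset (Finset V) := univ.filter (fun R => Resp R Pb ∧
    ∃ A ∈ 𝒜, ∃ B ∈ 𝒜, A ≠ B ∧ (∃ u ∈ A, u ∈ R) ∧ ∃ v ∈ B, v ∉ R) with h𝒮
  have hR₀𝒮 : R₀ ∈ 𝒮 := by
    simp only [h𝒮, mem_filter, mem_univ, true_and]
    exact ⟨hR₀resp, A₀, hA₀, B₀, hB₀, hAB₀, ⟨u₀, hu₀, hR₀u⟩, ⟨v₀, hv₀, hR₀v⟩⟩
  obtain ⟨S, hS𝒮, hSmin⟩ := Finset.exists_min_image 𝒮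
    (fun R => (G.cutset R).card) ⟨R₀, hR₀𝒮⟩
  rw [h𝒮, mem_filter] at hS𝒮
  obtain ⟨-, hSresp, Aₛ, hAₛ, Bₛ, hBₛ, hABₛ, ⟨aₛ, haₛA, haₛS⟩, ⟨bₛ, hbₛB, hbₛS⟩⟩ := hS𝒮
  have hScard : (G.cutset S).card ≤ k - 1 :=
    le_trans (hSmin R₀ hR₀𝒮) hR₀card
  have hScard' : (G.cutset S).card < k := by omega
  -- every class lies entirely inside or outside S
  have hsplit : ∀ A ∈ 𝒜, (∀ x ∈ A, x ∈ S) ∨ (∀ x ∈ A, x ∉ S) := by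
    intro A hA
    by_contra hc
    push_neg at hc
    obtain ⟨⟨x, hx, hxS⟩, ⟨y, hy, hyS⟩⟩ := hc
    exact absurd (hH2 A hA y hy x hx S hyS hxS) (by omega)
  set 𝒜₁ := 𝒜.filter (fun A => ∀ x ∈ A, x ∈ S) with h𝒜₁
  set 𝒜₂ := 𝒜.filter (fun A => ¬ ∀ x ∈ A, x ∈ S) with h𝒜₂
  have h𝒜₂out : ∀ A ∈ 𝒜₂, ∀ x ∈ A, x ∉ S := by
    intro A hA
    rw [h𝒜₂, mem_filter] at hA
    rcases hsplit A hA.1 with h | h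
    · exact absurd h hA.2
    · exact h
  have hcards : 𝒜₁.card + 𝒜₂.card = n := by
    rw [h𝒜₁, h𝒜₂, Finset.card_filter_add_card_filter_not, hcardn]
  have hAₛ1 : Aₛ ∈ 𝒜₁ := by
    rw [h𝒜₁, mem_filter]
    refine ⟨hAₛ, ?_⟩
    rcases hsplit Aₛ hAₛ with h | h
    · exact h
    · exact absurd haₛS (h aₛ haₛA)
  have hBₛ2 : Bₛ ∈ 𝒜₂ := by
    rw [h𝒜₂, mem_filter]
    exact ⟨hBₛ, fun h => hbₛS (h bₛ hbₛB)⟩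
  have hc₁ : 1 ≤ 𝒜₁.card := Finset.card_pos.2 ⟨Aₛ, hAₛ1⟩
  have hc₂ : 1 ≤ 𝒜₂.card := Finset.card_pos.2 ⟨Bₛ, hBₛ2⟩
  -- H1 for the inner side
  have hH1₁ : ∀ A ∈ 𝒜₁, ∀ B ∈ 𝒜₁, A ≠ B → ∀ u ∈ A, ∀ v ∈ B,
      ∃ R : Finset V, Resp R (insert Sᶜ Pb) ∧ u ∈ R ∧ v ∉ R ∧
        (G.cutset R).card ≤ k - 1 := by
    intro A hA B hB hAB u hu v hv
    have huS : u ∈ S := (mem_filter.1 hA).2 u hu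
    have hvS : v ∈ S := (mem_filter.1 hB).2 v hv
    obtain ⟨R, hRresp, huR, hvR, hRcard⟩ :=
      hH1 A (mem_of_mem_filter A hA) B (mem_of_mem_filter B hB) hAB u hu v hv
    by_cases hbR : bₛ ∈ R
    · refine ⟨R ∪ Sᶜ, ?_, Finset.mem_union_left _ huR, ?_, ?_⟩
      · intro B' hB'
        rcases Finset.mem_insert.1 hB' with rfl | hB'
        · exact Or.inl Finset.subset_union_right
        · exact (hRresp.union hSresp.compl) B' hB'
      · rw [Finset.mem_union]
        rintro (h | h)
        · exact hvR h
        · exact Finset.mem_compl.1 h hvS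
      · have hmem : R ∩ Sᶜ ∈ 𝒮 := by
          simp only [h𝒮, mem_filter, mem_univ, true_and]
          exact ⟨hRresp.inter hSresp.compl, Bₛ, hBₛ, Aₛ, hAₛ, Ne.symm hABₛ,
            ⟨bₛ, hbₛB, Finset.mem_inter.2 ⟨hbR, Finset.mem_compl.2 hbₛS⟩⟩,
            ⟨aₛ, haₛA, fun hc => Finset.mem_compl.1 (Finset.mem_inter.1 hc).2 haₛS⟩⟩
        have hsub := G.cutset_submodular R Sᶜ
        rw [cutset_compl] at hsub
        have := hSmin _ hmem
        omega
    · refine ⟨R ∩ S, ?_, Finset.mem_inter.2 ⟨huR, huS⟩,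
        fun hc => hvR (Finset.mem_inter.1 hc).1, ?_⟩
      · intro B' hB'
        rcases Finset.mem_insert.1 hB' with rfl | hB'
        · refine Or.inr (Finset.disjoint_left.2 fun x hx hc => ?_)
          exact Finset.mem_compl.1 hx (Finset.mem_inter.1 hc).2
        · exact (hRresp.inter hSresp) B' hB'
      · have hmem : R ∪ S ∈ 𝒮 := by
          simp only [h𝒮, mem_filter, mem_univ, true_and]
          exact ⟨hRresp.union hSresp, Aₛ, hAₛ, Bₛ, hBₛ, hABₛ,
            ⟨aₛ, haₛA, Finset.mem_union_right _ haₛS⟩,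
            ⟨bₛ, hbₛB, fun hc => (Finset.mem_union.1 hc).elim hbR hbₛS⟩⟩
        have hsub := G.cutset_submodular R S
        have := hSmin _ hmem
        omega
  -- H1 for the outer side
  have hH1₂ : ∀ A ∈ 𝒜₂, ∀ B ∈ 𝒜₂, A ≠ B → ∀ u ∈ A, ∀ v ∈ B,
      ∃ R : Finset V, Resp R (insert S Pb) ∧ u ∈ R ∧ v ∉ R ∧
        (G.cutset R).card ≤ k - 1 := by
    intro A hA B hB hAB u hu v hv
    have huS : u ∉ S := h𝒜₂out A hA u hu
    have hvS : v ∉ S := h𝒜₂out B hB v hv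
    obtain ⟨R, hRresp, huR, hvR, hRcard⟩ :=
      hH1 A (mem_of_mem_filter A hA) B (mem_of_mem_filter B hB) hAB u hu v hv
    by_cases haR : aₛ ∈ R
    · refine ⟨R ∪ S, ?_, Finset.mem_union_left _ huR, ?_, ?_⟩
      · intro B' hB'
        rcases Finset.mem_insert.1 hB' with rfl | hB'
        · exact Or.inl Finset.subset_union_right
        · exact (hRresp.union hSresp) B' hB'
      · rw [Finset.mem_union]
        rintro (h | h)
        · exact hvR h
        · exact hvS h
      · have hmem : R ∩ S ∈ 𝒮 := by
          simp only [h𝒮, mem_filter, mem_univ, true_and]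
          exact ⟨hRresp.inter hSresp, Aₛ, hAₛ, Bₛ, hBₛ, hABₛ,
            ⟨aₛ, haₛA, Finset.mem_inter.2 ⟨haR, haₛS⟩⟩,
            ⟨bₛ, hbₛB, fun hc => hbₛS (Finset.mem_inter.1 hc).2⟩⟩
        have hsub := G.cutset_submodular R S
        have := hSmin _ hmem
        omega
    · refine ⟨R ∩ Sᶜ, ?_, Finset.mem_inter.2 ⟨huR, Finset.mem_compl.2 huS⟩,
        fun hc => hvR (Finset.mem_inter.1 hc).1, ?_⟩
      · intro B' hB'
        rcases Finset.mem_insert.1 hB' with rfl | hB'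
        · refine Or.inr (Finset.disjoint_left.2 fun x hx hc => ?_)
          exact Finset.mem_compl.1 (Finset.mem_inter.1 hc).2 hx
        · exact (hRresp.inter hSresp.compl) B' hB'
      · have hmem : R ∪ Sᶜ ∈ 𝒮 := by
          simp only [h𝒮, mem_filter, mem_univ, true_and]
          exact ⟨hRresp.union hSresp.compl, Bₛ, hBₛ, Aₛ, hAₛ, Ne.symm hABₛ,
            ⟨bₛ, hbₛB, Finset.mem_union_right _ (Finset.mem_compl.2 hbₛS)⟩,
            ⟨aₛ, haₛA, fun hc => (Finset.mem_union.1 hc).elim haR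
              (fun h => Finset.mem_compl.1 h haₛS)⟩⟩
        have hsub := G.cutset_submodular R Sᶜ
        rw [cutset_compl] at hsub
        have := hSmin _ hmem
        omega
  -- recurse
  have hH2₁ : ∀ A ∈ 𝒜₁, ∀ u ∈ A, ∀ v ∈ A, ∀ R : Finset V, u ∈ R → v ∉ R →
      k ≤ (G.cutset R).card := fun A hA => hH2 A (mem_of_mem_filter A hA)
  have hH2₂ : ∀ A ∈ 𝒜₂, ∀ u ∈ A, ∀ v ∈ A, ∀ R : Finset V, u ∈ R → v ∉ R →
      k ≤ (G.cutset R).card := fun A hA => hH2 A (mem_of_mem_filter A hA)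
  obtain ⟨X₁, hX₁card, hX₁sep⟩ := ih 𝒜₁.card (by omega) 𝒜₁ (insert Sᶜ Pb) rfl
    (fun A hA => hne A (mem_of_mem_filter A hA)) hH1₁ hH2₁
  obtain ⟨X₂, hX₂card, hX₂sep⟩ := ih 𝒜₂.card (by omega) 𝒜₂ (insert S Pb) rfl
    (fun A hA => hne A (mem_of_mem_filter A hA)) hH1₂ hH2₂
  refine ⟨G.cutset S ∪ X₁ ∪ X₂, ?_, ?_⟩
  · obtain ⟨m₁, hm₁⟩ : ∃ m₁, 𝒜₁.card = m₁ + 1 := ⟨𝒜₁.card - 1, by omega⟩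
    obtain ⟨m₂, hm₂⟩ : ∃ m₂, 𝒜₂.card = m₂ + 1 := ⟨𝒜₂.card - 1, by omega⟩
    calc (G.cutset S ∪ X₁ ∪ X₂).card
        ≤ (G.cutset S ∪ X₁).card + X₂.card := Finset.card_union_le _ _
      _ ≤ (G.cutset S).card + X₁.card + X₂.card := by
          have := Finset.card_union_le (G.cutset S) X₁
          omega
      _ ≤ (k - 1) + m₁ * (k - 1) + m₂ * (k - 1) := by
          rw [hm₁] at hX₁card
          rw [hm₂] at hX₂card
          simp only [Nat.add_sub_cancel] at hX₁card hX₂card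
          omega
      _ = (m₁ + m₂ + 1) * (k - 1) := by ring
      _ = (𝒜.card - 1) * (k - 1) := by
          congr 1
          omega
  · have hXS : G.cutset S ⊆ G.cutset S ∪ X₁ ∪ X₂ := fun e he => by
      simp [Finset.mem_union, he]
    have hX1 : X₁ ⊆ G.cutset S ∪ X₁ ∪ X₂ := fun e he => by
      simp [Finset.mem_union, he]
    have hX2 : X₂ ⊆ G.cutset S ∪ X₁ ∪ X₂ := fun e he => by
      simp [Finset.mem_union, he]
    intro A hA B hB hAB u hu v hv
    have hmem2 : ∀ C ∈ 𝒜, C ∉ 𝒜₁ → C ∈ 𝒜₂ := fun C hC hC1 =>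
      Finset.mem_filter.2 ⟨hC, fun h => hC1 (Finset.mem_filter.2 ⟨hC, h⟩)⟩
    by_cases hA1 : A ∈ 𝒜₁ <;> by_cases hB1 : B ∈ 𝒜₁
    · obtain ⟨R, h1, h2, h3⟩ := hX₁sep A hA1 B hB1 hAB u hu v hv
      exact ⟨R, h1, h2, h3.trans hX1⟩
    · refine ⟨S, (Finset.mem_filter.1 hA1).2 u hu, ?_, hXS⟩
      exact h𝒜₂out B (hmem2 B hB hB1) v hv
    · refine ⟨Sᶜ, Finset.mem_compl.2 (h𝒜₂out A (hmem2 A hA hA1) u hu), ?_, ?_⟩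
      · exact fun hc => Finset.mem_compl.1 hc ((Finset.mem_filter.1 hB1).2 v hv)
      · rw [cutset_compl]
        exact hXS
    · obtain ⟨R, h1, h2, h3⟩ := hX₂sep A (hmem2 A hA hA1) B (hmem2 B hB hB1)
        hAB u hu v hv
      exact ⟨R, h1, h2, h3.trans hX2⟩

end Multigraph

/-- if `A₁, …, A_p` are nonempty subsets of `p` distinct
equivalence classes of `∼ₖ`, then some edge set `X` of size at most
`(p − 1)(k − 1)` separates all the sets pairwise: for distinct `i, j`, the
multigraph `G − X` contains no path (indeed no walk) from `A i` to `A j`. -/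
theorem simK_separate_classes
    {V E : Type} [Fintype V] [Fintype E] (G : Multigraph V E) (k p : ℕ)
    (hk : 1 ≤ k) (hp : 1 ≤ p) (A : Fin p → Set V)
    (hne : ∀ i, (A i).Nonempty)
    (hcl : ∀ i, ∀ a ∈ A i, ∀ a' ∈ A i, G.SimK k a a')
    (hdist : ∀ i j, i ≠ j → ∀ a ∈ A i, ∀ b ∈ A j, ¬ G.SimK k a b) :
    ∃ X : Finset E, X.card ≤ (p - 1) * (k - 1) ∧
      ∀ i j, i ≠ j → ∀ a ∈ A i, ∀ b ∈ A j, ∀ q : G.Walk a b,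
        ∃ e ∈ q.edges, e ∈ X := by
  classical
  open Multigraph Finset in
  -- the classes are pairwise distinct as sets
  have hinj : Function.Injective A := by
    intro i j hij
    by_contra hne'
    obtain ⟨a, ha⟩ := hne i
    exact hdist i j hne' a ha a (by rw [← hij]; exact ha) (Or.inl rfl)
  set 𝒜 : Finset (Set V) := Finset.image A Finset.univ with h𝒜
  have hcard𝒜 : 𝒜.card = p := by
    rw [h𝒜, Finset.card_image_of_injective _ hinj, Finset.card_univ, Fintype.card_fin]
  -- the same-class cut condition
  have hH2 : ∀ B ∈ 𝒜, ∀ u ∈ B, ∀ v ∈ B, ∀ R : Finset V, u ∈ R → v ∉ R →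
      k ≤ (G.cutset R).card := by
    intro B hB u hu v hv R huR hvR
    obtain ⟨i, -, rfl⟩ := Finset.mem_image.1 hB
    rcases hcl i u hu v hv with rfl | hEDP
    · exact absurd huR hvR
    · obtain ⟨P, hP1, hP2⟩ := hEDP
      have hφ : ∀ i : Fin k, ∃ e ∈ (P i).edges, G.Crossing R e := by
        intro i
        obtain ⟨e, he, x, y, hxy⟩ := Walk.exists_crossing_edge R (P i) huR hvR
        exact ⟨e, he, x, y, hxy⟩
      choose φ hφ1 hφ2 using hφ
      have : (Finset.univ : Finset (Fin k)).card ≤ (G.cutset R).card := by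
        apply Finset.card_le_card_of_injOn φ
        · intro i _
          exact mem_cutset.2 (hφ2 i)
        · intro i _ j _ hij
          by_contra hne'
          exact hP2 i j hne' (φ i) (hφ1 i) (hij ▸ hφ1 j)
      simpa using this
  -- the cross-class cut condition, via Menger
  have hH1 : ∀ B ∈ 𝒜, ∀ C ∈ 𝒜, B ≠ C → ∀ u ∈ B, ∀ v ∈ C,
      ∃ R : Finset V, Resp R (∅ : Finset (Finset V)) ∧ u ∈ R ∧ v ∉ R ∧
        (G.cutset R).card ≤ k - 1 := by
    intro B hB C hC hBC u hu v hv
    obtain ⟨i, -, rfl⟩ := Finset.mem_image.1 hB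
    obtain ⟨j, -, rfl⟩ := Finset.mem_image.1 hC
    have hij : i ≠ j := fun h => hBC (by rw [h])
    have hnsim := hdist i j hij u hu v hv
    by_contra hc
    push_neg at hc
    apply hnsim
    refine Or.inr (G.menger k u v fun R huR hvR => ?_)
    have := hc R (fun B hB => absurd hB (Finset.notMem_empty B)) huR hvR
    omega
  obtain ⟨X, hXcard, hXsep⟩ := Multigraph.separate_rec k hk p 𝒜 ∅ hcard𝒜
    (fun B hB => by
      obtain ⟨i, -, rfl⟩ := Finset.mem_image.1 hB
      exact hne i) hH1 hH2
  refine ⟨X, by rwa [hcard𝒜] at hXcard, fun i j hij a ha b hb q => ?_⟩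
  have hAij : A i ≠ A j := fun h => hij (hinj h)
  obtain ⟨R, haR, hbR, hRX⟩ := hXsep (A i) (Finset.mem_image_of_mem A (Finset.mem_univ i))
    (A j) (Finset.mem_image_of_mem A (Finset.mem_univ j)) hAij a ha b hb
  obtain ⟨e, he, x, y, hxy⟩ := Multigraph.Walk.exists_crossing_edge R q haR hbR
  exact ⟨e, he, hRX (Multigraph.mem_cutset.2 ⟨x, y, hxy⟩)⟩
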